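/- arXiv:math/0607399 — 3 statements merged into one kernel-verified Lean document; each statement's English description precedes it below -/
import Mathlib

section
/- Let q be a prime power and suppose 0 ≤ i ≤ n. Then the number of elements g of GL(n,q) whose fixed space has dimension exactly i is at most q^{n²−i²}. -/
open CategoryTheory
open scoped BigOperators Classical

noncomputable section

/-- The tensor-product Markov chain transition matrix on `Irr(G)` defined by a
representation `η`: from `λ` move to `ρ` with probability
`d_ρ · m_ρ(λ ⊗ η) / (d_λ · d_η)`, where
`m_ρ(λ ⊗ η) = (1/|G|) Σ_g χ^ρ(g) χ^η(g) conj(χ^λ(g))`. Here `V : ι → FDRep ℂ G`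
enumerates the irreducible representations of `G`, and `d_λ = χ^λ(1)`. -/
def tensorChain {G : Type} [Group G] [Fintype G] {ι : Type} [Fintype ι]
    (V : ι → FDRep ℂ G) (η : FDRep ℂ G) : Matrix ι ι ℂ :=
  Matrix.of fun l r =>
    (V r).character 1 *
      ((1 / (Fintype.card G : ℂ)) *
        ∑ g : G, (V r).character g * η.character g * (starRingEnd ℂ) ((V l).character g)) /
      ((V l).character 1 * η.character 1)

/-- The Plancherel measure on `Irr(G)`: `π(λ) = d_λ² / |G|`. -/
def plancherel {G : Type} [Group G] [Fintype G] {ι : Type} [Fintype ι]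
    (V : ι → FDRep ℂ G) : ι → ℂ :=
  fun i => ((V i).character 1) ^ 2 / (Fintype.card G : ℂ)

/-- Total variation distance between two (complex-valued) measures on a finite set. -/
def tvDist {ι : Type} [Fintype ι] (P Q : ι → ℂ) : ℝ :=
  (1 / 2) * ∑ x : ι, ‖P x - Q x‖

/-- The eigenfunction `f_C(ρ) = |C|^{1/2} χ^ρ(C) / d_ρ` attached to a conjugacy class. -/
def eigFun {G : Type} [Group G] [Fintype G] {ι : Type} [Fintype ι]
    (V : ι → FDRep ℂ G) (C : ConjClasses G) : ι → ℂ :=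
  fun i => (Real.sqrt (Nat.card C.carrier) : ℂ) * (V i).character (Quotient.out C) /
    (V i).character 1

/-- The probability that the random walk on `G` generated by the uniform measure on the
set `C`, started at the identity, lies in the set `T` after `s` steps; i.e. the
probability that a product of `s` i.i.d. uniform elements of `C` lies in `T`. -/
def classWalkProb {G : Type} [Group G] [Fintype G] (s : ℕ) (C T : Set G) : ℝ :=
  (Nat.card {v : Fin s → G // (∀ k, v k ∈ C) ∧ (List.ofFn v).prod ∈ T}) /
    (Nat.card C : ℝ) ^ s

/-- The number of fixed points of a permutation. -/
def numFixedPoints {n : ℕ} (g : Equiv.Perm (Fin n)) : ℕ :=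
  (Finset.univ.filter fun x => g x = x).card

/-- The dimension of the fixed space of `g ∈ GL(n,q)`. -/
def fixDim {n : ℕ} {F : Type} [Field F] (g : GL (Fin n) F) : ℕ :=
  Module.finrank F (LinearMap.ker (Matrix.toLin' ((g : Matrix (Fin n) (Fin n) F) - 1)))

/-- The quantum Fourier sampling measure `P_H(ρ) = (d_ρ/|G|) Σ_{h ∈ H} χ^ρ(h)`. -/
def fourierSample {G : Type} [Group G] [Fintype G] {ι : Type} [Fintype ι]
    (V : ι → FDRep ℂ G) (H : Subgroup G) : ι → ℂ :=
  fun ρ => (V ρ).character 1 / (Fintype.card G : ℂ) * ∑ h : H, (V ρ).character (h : G)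

set_option linter.unusedSectionVars false

namespace CardGLAux

open Module LinearMap

variable {F : Type} [Field F] [Fintype F] [DecidableEq F] {n i : ℕ}

noncomputable def auxE {n m : ℕ} (C : Submodule F (Fin n → F))
    (h : Module.finrank F C = m) : (Fin m → F) ≃ₗ[F] C :=
  LinearEquiv.ofFinrankEq _ _ (by rw [h, Module.finrank_fin_fun])

noncomputable def auxW {n : ℕ} (C : Submodule F (Fin n → F)) : Submodule F (Fin n → F) :=
  (Submodule.exists_isCompl C).choose

lemma auxW_isCompl {n : ℕ} (C : Submodule F (Fin n → F)) : IsCompl C (auxW C) :=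
  (Submodule.exists_isCompl C).choose_spec

noncomputable def auxWE {n m : ℕ} (C : Submodule F (Fin n → F))
    (h : Module.finrank F (auxW C) = m) : (Fin m → F) ≃ₗ[F] (auxW C) :=
  LinearEquiv.ofFinrankEq _ _ (by rw [h, Module.finrank_fin_fun])

lemma auxE_congr {n m : ℕ} {C₁ C₂ : Submodule F (Fin n → F)} (hC : C₁ = C₂)
    (h₁ : Module.finrank F C₁ = m) (h₂ : Module.finrank F C₂ = m) (y : Fin m → F) :
    (auxE C₁ h₁ y : Fin n → F) = (auxE C₂ h₂ y : Fin n → F) := by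
  subst hC; rfl

lemma auxWE_congr {n m : ℕ} {C₁ C₂ : Submodule F (Fin n → F)} (hC : C₁ = C₂)
    (h₁ : Module.finrank F (auxW C₁) = m) (h₂ : Module.finrank F (auxW C₂) = m) (y : Fin m → F) :
    (auxWE C₁ h₁ y : Fin n → F) = (auxWE C₂ h₂ y : Fin n → F) := by
  subst hC; rfl

/-- Encoding of the action of `f` on `C` (shifted by the identity). -/
noncomputable def encU {n m : ℕ} (f : (Fin n → F) →ₗ[F] (Fin n → F))
    (C : Submodule F (Fin n → F)) (hm : ∀ x ∈ C, f x ∈ C)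
    (h : Module.finrank F C = m) : (Fin m → F) →ₗ[F] (Fin n → F) :=
  C.subtype ∘ₗ (LinearMap.id + f.restrict hm) ∘ₗ (auxE C h).toLinearMap

/-- Encoding of the action of `f` on the chosen complement of `C`. -/
noncomputable def encV {n m k : ℕ} (f : (Fin n → F) →ₗ[F] (Fin n → F))
    (C : Submodule F (Fin n → F)) (hr : ∀ x, f x ∈ C)
    (h : Module.finrank F C = m) (hW : Module.finrank F (auxW C) = k) :
    (Fin k → F) →ₗ[F] (Fin m → F) :=
  (auxE C h).symm.toLinearMap ∘ₗ (f.codRestrict C hr) ∘ₗ (auxW C).subtype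
    ∘ₗ (auxWE C hW).toLinearMap

lemma encU_apply {n m : ℕ} (f : (Fin n → F) →ₗ[F] (Fin n → F))
    (C : Submodule F (Fin n → F)) (hm : ∀ x ∈ C, f x ∈ C)
    (h : Module.finrank F C = m) (y : Fin m → F) :
    encU f C hm h y = (auxE C h y : Fin n → F) + f (auxE C h y) := by
  simp [encU, LinearMap.restrict_coe_apply]

lemma encV_apply {n m k : ℕ} (f : (Fin n → F) →ₗ[F] (Fin n → F))
    (C : Submodule F (Fin n → F)) (hr : ∀ x, f x ∈ C)
    (h : Module.finrank F C = m) (hW : Module.finrank F (auxW C) = k) (z : Fin k → F) :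
    (auxE C h (encV f C hr h hW z) : Fin n → F) = f (auxWE C hW z : Fin n → F) := by
  simp [encV]

lemma encU_range {n m : ℕ} (f : (Fin n → F) →ₗ[F] (Fin n → F))
    (C : Submodule F (Fin n → F)) (hm : ∀ x ∈ C, f x ∈ C)
    (h : Module.finrank F C = m)
    (hinj : Function.Injective ((LinearMap.id + f.restrict hm : C →ₗ[F] C))) :
    LinearMap.range (encU f C hm h) = C := by
  have hsurj : Function.Surjective ((LinearMap.id + f.restrict hm : C →ₗ[F] C)) :=
    LinearMap.injective_iff_surjective.mp hinj
  rw [encU, LinearMap.range_comp, LinearMap.range_comp,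
    LinearEquiv.range, Submodule.map_top, LinearMap.range_eq_top.mpr hsurj,
    Submodule.map_top, Submodule.range_subtype]



noncomputable def glF (g : GL (Fin n) F) : (Fin n → F) →ₗ[F] (Fin n → F) :=
  Matrix.toLin' ((g : Matrix (Fin n) (Fin n) F) - 1)

noncomputable def glC (g : GL (Fin n) F) : Submodule F (Fin n → F) :=
  LinearMap.range (glF g)

lemma glF_mem (g : GL (Fin n) F) : ∀ x ∈ glC g, glF g x ∈ glC g :=
  fun x _ => LinearMap.mem_range_self _ x

lemma glF_mem' (g : GL (Fin n) F) : ∀ x, glF g x ∈ glC g :=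
  fun x => LinearMap.mem_range_self _ x

lemma glF_add_inj (g : GL (Fin n) F) : ∀ v : Fin n → F, v + glF g v = 0 → v = 0 := by
  intro v hv
  have h1 : Matrix.toLin' ((g : Matrix (Fin n) (Fin n) F)) v = 0 := by
    have : ((g : Matrix (Fin n) (Fin n) F)) = ((g : Matrix (Fin n) (Fin n) F) - 1) + 1 := by
      rw [sub_add_cancel]
    rw [this, map_add, Matrix.toLin'_one]
    simpa [glF, add_comm] using hv
  have h2 := congrArg (Matrix.toLin' (((g⁻¹ : GL (Fin n) F) : Matrix (Fin n) (Fin n) F))) h1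
  rwa [← Matrix.toLin'_mul_apply, map_zero, ← Matrix.GeneralLinearGroup.coe_mul,
    inv_mul_cancel, Matrix.GeneralLinearGroup.coe_one, Matrix.toLin'_one, LinearMap.id_apply]
    at h2

lemma glA_inj (g : GL (Fin n) F) :
    Function.Injective ((LinearMap.id + (glF g).restrict (glF_mem g) : glC g →ₗ[F] glC g)) := by
  rw [injective_iff_map_eq_zero]
  intro x hx
  have hx' : (x : Fin n → F) + glF g x = 0 := by
    have := congrArg (Subtype.val) hx
    simpa [LinearMap.restrict_coe_apply] using this
  exact Subtype.ext (glF_add_inj g _ hx')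

lemma glC_finrank (g : GL (Fin n) F) (hg : fixDim g = i) (hi : i ≤ n) :
    Module.finrank F (glC g) = n - i := by
  show Module.finrank F (LinearMap.range (glF g)) = n - i
  have h1 := LinearMap.finrank_range_add_finrank_ker (glF g)
  rw [Module.finrank_fin_fun] at h1
  have h2 : Module.finrank F (LinearMap.ker (glF g)) = i := hg
  omega

lemma glW_finrank (g : GL (Fin n) F) (hg : fixDim g = i) (hi : i ≤ n) :
    Module.finrank F (auxW (glC g)) = i := by
  have h1 := Submodule.finrank_add_eq_of_isCompl (auxW_isCompl (glC g))
  rw [Module.finrank_fin_fun, glC_finrank g hg hi] at h1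
  omega

end CardGLAux

/-- Lemma: for `0 ≤ i ≤ n`, the number of elements of `GL(n,q)` whose fixed space
has dimension exactly `i` is at most `q^(n² − i²)`. Here `F` is the field with `q`
elements. -/
theorem card_gl_with_fixed_space_dim_le {n i : ℕ} {F : Type} [Field F] [Fintype F]
    [DecidableEq F] (hi : i ≤ n) :
    Nat.card {g : GL (Fin n) F // fixDim g = i} ≤ (Fintype.card F) ^ (n ^ 2 - i ^ 2) := by
  classical
  open CardGLAux in
  let T := (((Fin (n-i) → F) →ₗ[F] (Fin n → F)) × ((Fin i → F) →ₗ[F] (Fin (n-i) → F)))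
  let eT : T ≃ (Matrix (Fin n) (Fin (n-i)) F × Matrix (Fin (n-i)) (Fin i) F) :=
    (LinearMap.toMatrix'.toEquiv).prodCongr (LinearMap.toMatrix'.toEquiv)
  haveI : Finite T := Finite.of_equiv _ eT.symm
  let Φ : {g : GL (Fin n) F // fixDim g = i} → T := fun gp =>
    (encU (glF gp.1) (glC gp.1) (glF_mem gp.1) (glC_finrank gp.1 gp.2 hi),
     encV (glF gp.1) (glC gp.1) (glF_mem' gp.1) (glC_finrank gp.1 gp.2 hi)
       (glW_finrank gp.1 gp.2 hi))
  have hΦ : Function.Injective Φ := by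
    intro g₁ g₂ h
    have heqU := congrArg Prod.fst h
    have heqV := congrArg Prod.snd h
    simp only [Φ] at heqU heqV
    set h₁ := glC_finrank g₁.1 g₁.2 hi with hh₁
    set h₂ := glC_finrank g₂.1 g₂.2 hi with hh₂
    set hW₁ := glW_finrank g₁.1 g₁.2 hi with hhW₁
    set hW₂ := glW_finrank g₂.1 g₂.2 hi with hhW₂
    have hC : glC g₁.1 = glC g₂.1 := by
      rw [← encU_range (glF g₁.1) (glC g₁.1) (glF_mem g₁.1) h₁ (glA_inj g₁.1),
        ← encU_range (glF g₂.1) (glC g₂.1) (glF_mem g₂.1) h₂ (glA_inj g₂.1), heqU]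
    have hfC : ∀ x ∈ glC g₁.1, glF g₁.1 x = glF g₂.1 x := by
      intro x hx
      set y := (auxE (glC g₁.1) h₁).symm ⟨x, hx⟩ with hy
      have hxy : (auxE (glC g₁.1) h₁ y : Fin n → F) = x := by
        rw [hy, LinearEquiv.apply_symm_apply]
      have e1 := encU_apply (glF g₁.1) (glC g₁.1) (glF_mem g₁.1) h₁ y
      have e2 := encU_apply (glF g₂.1) (glC g₂.1) (glF_mem g₂.1) h₂ y
      have hcoe : (auxE (glC g₂.1) h₂ y : Fin n → F) = x := by
        rw [← auxE_congr hC h₁ h₂ y, hxy]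
      rw [hxy] at e1
      rw [hcoe] at e2
      rw [heqU, e2] at e1
      exact (add_left_cancel e1).symm
    have hfW : ∀ x ∈ auxW (glC g₁.1), glF g₁.1 x = glF g₂.1 x := by
      intro x hx
      set z := (auxWE (glC g₁.1) hW₁).symm ⟨x, hx⟩ with hz
      have hxz : (auxWE (glC g₁.1) hW₁ z : Fin n → F) = x := by
        rw [hz, LinearEquiv.apply_symm_apply]
      have e1 := encV_apply (glF g₁.1) (glC g₁.1) (glF_mem' g₁.1) h₁ hW₁ z
      have e2 := encV_apply (glF g₂.1) (glC g₂.1) (glF_mem' g₂.1) h₂ hW₂ z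
      rw [hxz] at e1
      rw [← auxWE_congr hC hW₁ hW₂ z, hxz] at e2
      rw [← e1, ← e2, heqV]
      exact auxE_congr hC h₁ h₂ _
    have hf : glF g₁.1 = glF g₂.1 := by
      apply LinearMap.ext; intro x
      have hx : x ∈ glC g₁.1 ⊔ auxW (glC g₁.1) := by
        rw [(auxW_isCompl (glC g₁.1)).codisjoint.eq_top]; trivial
      obtain ⟨c, hc, w, hw, rfl⟩ := Submodule.mem_sup.mp hx
      rw [map_add, map_add, hfC c hc, hfW w hw]
    have hM : ((g₁.1 : Matrix (Fin n) (Fin n) F)) = (g₂.1 : Matrix (Fin n) (Fin n) F) := by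
      have h' : ((g₁.1 : Matrix (Fin n) (Fin n) F)) - 1 = (g₂.1 : Matrix (Fin n) (Fin n) F) - 1 :=
        Matrix.toLin'.injective hf
      have h'' := congrArg (fun M : Matrix (Fin n) (Fin n) F => M + 1) h'
      simpa [sub_add_cancel] using h''
    exact Subtype.ext (Units.ext hM)
  have hcard := Nat.card_le_card_of_injective Φ hΦ
  have c1 : Fintype.card (Matrix (Fin n) (Fin (n-i)) F) = Fintype.card F ^ ((n-i) * n) := by
    show Fintype.card (Fin n → Fin (n-i) → F) = _
    rw [Fintype.card_fun, Fintype.card_fun, Fintype.card_fin, Fintype.card_fin, ← pow_mul]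
  have c2 : Fintype.card (Matrix (Fin (n-i)) (Fin i) F) = Fintype.card F ^ (i * (n-i)) := by
    show Fintype.card (Fin (n-i) → Fin i → F) = _
    rw [Fintype.card_fun, Fintype.card_fun, Fintype.card_fin, Fintype.card_fin, ← pow_mul]
  have hT : Nat.card T = (Fintype.card F) ^ (n ^ 2 - i ^ 2) := by
    rw [Nat.card_congr eT]
    simp only [Nat.card_eq_fintype_card, Fintype.card_prod, c1, c2, ← pow_add]
    congr 1
    obtain ⟨k, rfl⟩ := Nat.le.dest hi
    rw [Nat.add_sub_cancel_left]
    have hsq : (i + k) ^ 2 = i ^ 2 + (k * (i + k) + i * k) := by ring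
    omega
  rw [← hT]
  exact hcard

end
end

section
/- Let G be a finite group and H a subgroup of G. For each subgroup H, define the probability measure P_H on Irr(G) by P_H(ρ) = (d_ρ/|G|)·Σ_{h∈H} χ^ρ(h). Let C_1,…,C_k denote the non-identity conjugacy classes of G. Then the total variation distance satisfies ||P_H − P_{{e}}||_TV ≤ (1/2)·[ Σ_{i=1}^k |C_i ∩ H|²·|C_i|^{−1} ]^{1/2}, where P_{{e}} is the measure corresponding to the trivial subgroup (i.e., the Plancherel measure ρ ↦ d_ρ²/|G|). -/
open CategoryTheory
open scoped BigOperators Classical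

noncomputable section

namespace KSaux


open Matrix
open scoped ComplexOrder

variable {G : Type} [Group G] [Fintype G]

/-- Over ℂ, `χ(g⁻¹) = conj (χ g)` for any finite-group representation. -/
theorem char_inv_eq_conj (V : FDRep ℂ G) (g : G) :
    V.character g⁻¹ = (starRingEnd ℂ) (V.character g) := by
  classical
  let b := Module.finBasis ℂ V
  let B : G → Matrix _ _ ℂ := fun x => LinearMap.toMatrix b b (V.ρ x)
  have hmul : ∀ x y : G, B (x * y) = B x * B y := by
    intro x y
    simp only [B, _root_.map_mul, LinearMap.toMatrix_mul]
  have hone : B 1 = 1 := by simp only [B, _root_.map_one, LinearMap.toMatrix_one]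
  have htr : ∀ x : G, V.character x = (B x).trace := by
    intro x
    exact LinearMap.trace_eq_matrix_trace ℂ b _
  set M : Matrix _ _ ℂ := ∑ h : G, (B h)ᴴ * B h with hM
  have hMpos : M.PosDef := by
    have h1 : M = (B 1)ᴴ * B 1 + ∑ h ∈ Finset.univ.erase 1, (B h)ᴴ * B h :=
      (Finset.add_sum_erase _ _ (Finset.mem_univ 1)).symm
    rw [h1, hone, Matrix.conjTranspose_one, one_mul]
    refine Matrix.PosDef.add_posSemidef Matrix.PosDef.one ?_
    refine Finset.sum_induction _ _ (fun a b ha hb => ha.add hb) Matrix.PosSemidef.zero ?_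
    exact fun h _ => Matrix.posSemidef_conjTranspose_mul_self _
  have hMunit : IsUnit M := hMpos.isUnit
  have hMinv : Invertible M := hMunit.invertible
  have hfix : (B g)ᴴ * M * B g = M := by
    rw [hM, Finset.mul_sum, Finset.sum_mul]
    refine Fintype.sum_equiv (Equiv.mulRight g) _ _ fun h => ?_
    simp only [Equiv.coe_mulRight, hmul, Matrix.conjTranspose_mul]
    noncomm_ring
  have hBg : B g * B g⁻¹ = 1 := by rw [← hmul, mul_inv_cancel, hone]
  have key : B g⁻¹ = M⁻¹ * ((B g)ᴴ * M) := by
    have h1 : (B g)ᴴ * M = M * B g⁻¹ := by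
      calc (B g)ᴴ * M = ((B g)ᴴ * M * B g) * B g⁻¹ := by
            rw [mul_assoc, mul_assoc, hBg, mul_one]
        _ = M * B g⁻¹ := by rw [hfix]
    rw [h1, Matrix.inv_mul_cancel_left_of_invertible]
  have htrc : (B g⁻¹).trace = star (B g).trace := by
    rw [key, ← Matrix.trace_mul_comm, Matrix.mul_inv_cancel_right_of_invertible,
      Matrix.trace_conjTranspose]
  rw [htr, htr, htrc]
  rfl

/-- Characters of representations are class functions. -/
theorem char_isConj (V : FDRep ℂ G) {x y : G} (h : IsConj x y) :
    V.character x = V.character y := by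
  obtain ⟨c, hc⟩ := isConj_iff.1 h
  rw [← hc, FDRep.char_conj]

variable {ι : Type} [Fintype ι]

/-- First orthogonality, hermitian form. -/
theorem char_sum_orth (V : ι → FDRep ℂ G)
    (hirr : ∀ i, CategoryTheory.Simple (V i))
    (hdistinct : ∀ i j : ι, Nonempty (V i ≅ V j) → i = j) (i j : ι) :
    ∑ g : G, (starRingEnd ℂ) ((V i).character g) * (V j).character g
      = if i = j then (Fintype.card G : ℂ) else 0 := by
  classical
  haveI := hirr i
  haveI := hirr j
  have hcard : ((Fintype.card G : ℂ)) ≠ 0 := by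
    exact_mod_cast Fintype.card_ne_zero
  letI instInv : Invertible ((Fintype.card G : ℂ)) := invertibleOfNonzero hcard
  have horth : ⅟ ((Fintype.card G : ℂ)) • ∑ g : G, (V i).character g * (V j).character g⁻¹
      = if Nonempty (V i ≅ V j) then (1 : ℂ) else 0 :=
    by
      have h := FDRep.char_orthonormal (V i) (V j)
      rw [Nat.card_eq_fintype_card] at h
      rw [smul_eq_mul, invOf_eq_inv]; exact h
  have h1 : ∑ g : G, (starRingEnd ℂ) ((V i).character g) * (V j).character g
      = ∑ g : G, (V i).character g * (V j).character g⁻¹ := by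
    refine Fintype.sum_equiv (Equiv.inv G) _ _ fun g => ?_
    simp only [Equiv.inv_apply, ← char_inv_eq_conj, inv_inv]
  rw [h1]
  have h2 : ∑ g : G, (V i).character g * (V j).character g⁻¹
      = (Fintype.card G : ℂ) * (if Nonempty (V i ≅ V j) then (1 : ℂ) else 0) := by
    rw [← horth, smul_eq_mul, invOf_eq_inv, ← mul_assoc,
      mul_inv_cancel₀ hcard, one_mul]
  rw [h2]
  by_cases hij : i = j
  · subst hij
    simp
  · have : ¬ Nonempty (V i ≅ V j) := fun hne => hij (hdistinct i j hne)
    simp [hij, this]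

/-- Class-averaging identity. -/
theorem avg_class_sum (S : Finset G) (χ : G → ℂ)
    (hχ : ∀ x y : G, IsConj x y → χ x = χ y) :
    ∑ g : G, (((S ∩ Finset.univ.filter (fun x => IsConj g x)).card : ℂ) /
        ((Finset.univ.filter (fun x => IsConj g x)).card : ℂ)) * χ g
      = ∑ h ∈ S, χ h := by
  classical
  set K : G → Finset G := fun g => Finset.univ.filter (fun x => IsConj g x) with hK
  have step1 : ∀ g : G,
      (((S ∩ K g).card : ℂ) / ((K g).card : ℂ)) * χ g
        = ∑ h ∈ S, ite (IsConj g h) (χ g / ((K g).card : ℂ)) 0 := by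
    intro g
    have hcl : S ∩ K g = S.filter (fun h => IsConj g h) := by
      ext x
      simp [hK, and_comm]
    rw [hcl, Finset.card_filter]
    push_cast
    rw [Finset.sum_div, Finset.sum_mul]
    refine Finset.sum_congr rfl fun h _ => ?_
    split <;> simp [div_eq_mul_inv, mul_comm]
  calc ∑ g : G, (((S ∩ K g).card : ℂ) / ((K g).card : ℂ)) * χ g
      = ∑ g : G, ∑ h ∈ S, ite (IsConj g h) (χ g / ((K g).card : ℂ)) 0 :=
        Finset.sum_congr rfl fun g _ => step1 g
    _ = ∑ h ∈ S, ∑ g : G, ite (IsConj g h) (χ g / ((K g).card : ℂ)) 0 := Finset.sum_comm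
    _ = ∑ h ∈ S, χ h := ?_
  refine Finset.sum_congr rfl fun h _ => ?_
  have h1 : ∑ g : G, ite (IsConj g h) (χ g / ((K g).card : ℂ)) 0
      = ∑ g ∈ Finset.univ.filter (fun g => IsConj g h), χ g / ((K g).card : ℂ) :=
    (Finset.sum_filter _ _).symm
  have h2 : Finset.univ.filter (fun g => IsConj g h) = K h := by
    ext x
    simp only [hK, Finset.mem_filter, Finset.mem_univ, true_and]
    exact isConj_comm
  have h3 : ∀ g ∈ K h, χ g / ((K g).card : ℂ) = χ h / ((K h).card : ℂ) := by
    intro g hg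
    have hhg : IsConj h g := by simpa [hK] using hg
    have hKg : K g = K h := by
      ext x
      simp only [hK, Finset.mem_filter, Finset.mem_univ, true_and]
      exact ⟨fun hx => hhg.trans hx, fun hx => hhg.symm.trans hx⟩
    rw [hKg, hχ g h hhg.symm]
  have hmem : h ∈ K h := by
    simp only [hK, Finset.mem_filter, Finset.mem_univ, true_and]
    exact IsConj.refl h
  have hcard : ((K h).card : ℂ) ≠ 0 := by
    exact_mod_cast Finset.card_ne_zero_of_mem hmem
  rw [h1, h2, Finset.sum_congr rfl h3, Finset.sum_const, nsmul_eq_mul,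
    mul_div_assoc', mul_comm, mul_div_assoc, div_self hcard, mul_one]




set_option maxHeartbeats 800000 in
theorem sum_sq_ratio [Fintype (ConjClasses G)] [DecidableEq (ConjClasses G)] (H : Subgroup G) :
    ∑ g : G, (((Finset.univ.filter (fun h : G => h ∈ H ∧ h ≠ 1) ∩
          Finset.univ.filter (fun x => IsConj g x)).card : ℝ) /
        ((Finset.univ.filter (fun x => IsConj g x)).card : ℝ)) ^ 2
      = ∑ C ∈ Finset.univ.filter (fun C : ConjClasses G => C ≠ ConjClasses.mk 1),
          (Nat.card (C.carrier ∩ (H : Set G) : Set G) : ℝ) ^ 2 / (Nat.card C.carrier : ℝ) := by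
  classical
  set S : Finset G := Finset.univ.filter (fun h : G => h ∈ H ∧ h ≠ 1) with hS
  set nS : ConjClasses G → ℕ :=
    fun C => (S.filter (fun x => ConjClasses.mk x = C)).card with hnS
  set nK : ConjClasses G → ℕ :=
    fun C => (Finset.univ.filter (fun x : G => ConjClasses.mk x = C)).card with hnK
  set F : ConjClasses G → ℝ := fun C => ((nS C : ℝ) / (nK C : ℝ)) ^ 2 with hF
  have hper : ∀ g : G,
      (((S ∩ Finset.univ.filter (fun x => IsConj g x)).card : ℝ) /
        ((Finset.univ.filter (fun x => IsConj g x)).card : ℝ)) ^ 2 = F (ConjClasses.mk g) := by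
    intro g
    have e1 : S ∩ Finset.univ.filter (fun x => IsConj g x)
        = S.filter (fun x => ConjClasses.mk x = ConjClasses.mk g) := by
      ext x
      simp only [Finset.mem_inter, Finset.mem_filter, Finset.mem_univ, true_and,
        ConjClasses.mk_eq_mk_iff_isConj]
      rw [isConj_comm]
    have e2 : Finset.univ.filter (fun x => IsConj g x)
        = Finset.univ.filter (fun x : G => ConjClasses.mk x = ConjClasses.mk g) := by
      ext x
      simp only [Finset.mem_filter, Finset.mem_univ, true_and,
        ConjClasses.mk_eq_mk_iff_isConj]
      rw [isConj_comm]
    rw [e1, e2]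
  rw [Finset.sum_congr rfl fun g _ => hper g]
  rw [← Finset.sum_fiberwise' Finset.univ ConjClasses.mk F]
  have hcount : ∀ C : ConjClasses G,
      ∑ g ∈ Finset.univ.filter (fun g : G => ConjClasses.mk g = C), F C = (nK C : ℝ) * F C := by
    intro C
    rw [Finset.sum_const, nsmul_eq_mul]
  rw [Finset.sum_congr rfl fun C _ => hcount C, Finset.sum_filter]
  refine Finset.sum_congr rfl fun C _ => ?_
  by_cases hC : C = ConjClasses.mk 1
  · subst hC
    have : nS (ConjClasses.mk 1) = 0 := by
      rw [hnS, Finset.card_eq_zero]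
      ext x
      simp only [Finset.mem_filter, Finset.notMem_empty, iff_false, not_and, hS,
        Finset.mem_univ, true_and, ConjClasses.mk_eq_mk_iff_isConj, isConj_one_left]
      rintro ⟨_, hx1⟩ h1
      exact hx1 h1
    simp [hF, this]
  · have hK : Nat.card C.carrier = nK C := by
      rw [Nat.card_coe_set_eq, Set.ncard_eq_toFinset_card']
      congr 1
      ext x
      simp [ConjClasses.mem_carrier_iff_mk_eq]
    have hSH : Nat.card (C.carrier ∩ (H : Set G) : Set G) = nS C := by
      rw [Nat.card_coe_set_eq, Set.ncard_eq_toFinset_card']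
      congr 1
      ext x
      simp only [Set.mem_toFinset, Set.mem_inter_iff, ConjClasses.mem_carrier_iff_mk_eq,
        SetLike.mem_coe, hnS, Finset.mem_filter, hS, Finset.mem_univ, true_and]
      constructor
      · rintro ⟨hmk, hH⟩
        refine ⟨⟨hH, ?_⟩, hmk⟩
        rintro rfl
        exact hC hmk.symm
      · rintro ⟨⟨hH, _⟩, hmk⟩
        exact ⟨hmk, hH⟩
    have hKne : (nK C : ℝ) ≠ 0 := by
      obtain ⟨a, rfl⟩ := ConjClasses.exists_rep C
      have ha : a ∈ Finset.univ.filter (fun x : G => ConjClasses.mk x = ConjClasses.mk a) := by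
        simp
      exact_mod_cast Finset.card_ne_zero_of_mem ha
    rw [if_pos hC, hK, hSH, hF]
    field_simp

end KSaux

open KSaux

set_option maxHeartbeats 1000000

/-- Proposition (sharpened Kempe–Shalev bound): with `P_H(ρ) = (d_ρ/|G|) Σ_(h∈H) χ^ρ(h)`
and `C_1, …, C_k` the non-identity conjugacy classes of `G`,
`‖P_H − P_(e)‖_TV ≤ (1/2) [Σ_i |C_i ∩ H|² |C_i|⁻¹]^(1/2)`,
where `P_(e)` is the measure for the trivial subgroup (the Plancherel measure). -/
theorem fourier_sample_tv_le_sqrt {G : Type} [Group G] [Fintype G]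
    [Fintype (ConjClasses G)] [DecidableEq (ConjClasses G)]
    {ι : Type} [Fintype ι] [DecidableEq ι]
    (V : ι → FDRep ℂ G)
    (hirr : ∀ i, CategoryTheory.Simple (V i))
    (hdistinct : ∀ i j : ι, Nonempty (V i ≅ V j) → i = j)
    (hcomplete : ∀ W : FDRep ℂ G, CategoryTheory.Simple W → ∃ i, Nonempty (W ≅ V i))
    (H : Subgroup G) :
    tvDist (fourierSample V H) (fourierSample V ⊥) ≤
      (1 / 2) * Real.sqrt (∑ C ∈ Finset.univ.filter
          (fun C : ConjClasses G => C ≠ ConjClasses.mk 1),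
        (Nat.card (C.carrier ∩ (H : Set G) : Set G) : ℝ) ^ 2 / (Nat.card C.carrier : ℝ)) := by
  classical
  have hnpos : 0 < Fintype.card G := Fintype.card_pos
  have hnR : (0:ℝ) < (Fintype.card G : ℝ) := by exact_mod_cast hnpos
  have hnC : ((Fintype.card G : ℂ)) ≠ 0 := by exact_mod_cast hnpos.ne'
  have hsqpos : 0 < Real.sqrt (Fintype.card G) := Real.sqrt_pos.mpr hnR
  have hcne : ((Real.sqrt (Fintype.card G) : ℝ) : ℂ) ≠ 0 := by exact_mod_cast hsqpos.ne'
  have hcc : ((Real.sqrt (Fintype.card G) : ℝ) : ℂ) * ((Real.sqrt (Fintype.card G) : ℝ) : ℂ)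
      = ((Fintype.card G : ℕ) : ℂ) := by
    rw [← Complex.ofReal_mul, Real.mul_self_sqrt hnR.le]
    norm_cast
  set S : Finset G := Finset.univ.filter (fun h : G => h ∈ H ∧ h ≠ 1) with hS
  set K : G → Finset G := fun g => Finset.univ.filter (fun x => IsConj g x) with hK
  -- the orthonormal family of normalized characters
  set w : ι → EuclideanSpace ℂ G :=
    fun i => WithLp.toLp 2 (fun g => (V i).character g / ((Real.sqrt (Fintype.card G) : ℝ) : ℂ) : G → ℂ)
    with hw
  have hworth : Orthonormal ℂ w := by
    rw [orthonormal_iff_ite]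
    intro i j
    have h1 : (inner ℂ (w i) (w j) : ℂ)
        = ∑ g : G, (starRingEnd ℂ) ((V i).character g) * (V j).character g
            / ((Fintype.card G : ℕ) : ℂ) := by
      rw [PiLp.inner_apply]
      refine Finset.sum_congr rfl fun g _ => ?_
      simp only [hw, RCLike.inner_apply]
      rw [map_div₀, Complex.conj_ofReal, div_mul_div_comm, hcc]
      ring
    rw [h1, ← Finset.sum_div, char_sum_orth V hirr hdistinct i j]
    split
    · rw [div_self hnC]
    · rw [zero_div]
  -- the averaged indicator vector
  set fvec : EuclideanSpace ℂ G :=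
    WithLp.toLp 2 (fun g => (((S ∩ K g).card : ℂ) / ((K g).card : ℂ)) : G → ℂ) with hfvec
  have hinner : ∀ i : ι, ‖(inner ℂ (w i) fvec : ℂ)‖
      = ‖∑ h ∈ S, (V i).character h‖ / Real.sqrt (Fintype.card G) := by
    intro i
    have h1 : (inner ℂ (w i) fvec : ℂ)
        = (∑ g : G, (starRingEnd ℂ) ((V i).character g) *
            (((S ∩ K g).card : ℂ) / ((K g).card : ℂ)))
              / ((Real.sqrt (Fintype.card G) : ℝ) : ℂ) := by
      rw [PiLp.inner_apply, Finset.sum_div]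
      refine Finset.sum_congr rfl fun g _ => ?_
      simp only [hw, hfvec, RCLike.inner_apply]
      rw [map_div₀, Complex.conj_ofReal]
      ring
    have h2 : (∑ g : G, (starRingEnd ℂ) ((V i).character g) *
          (((S ∩ K g).card : ℂ) / ((K g).card : ℂ)))
        = (starRingEnd ℂ) (∑ h ∈ S, (V i).character h) := by
      rw [← avg_class_sum S (V i).character (fun x y hxy => char_isConj (V i) hxy), map_sum]
      refine Finset.sum_congr rfl fun g _ => ?_
      rw [map_mul, map_div₀, Complex.conj_natCast, Complex.conj_natCast]
      ring
    rw [h1, h2, norm_div, RCLike.norm_conj,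
      Complex.norm_real, Real.norm_of_nonneg (Real.sqrt_nonneg _)]
  have hdiff : ∀ i : ι, fourierSample V H i - fourierSample V ⊥ i
      = (V i).character 1 / ((Fintype.card G : ℕ) : ℂ) * ∑ h ∈ S, (V i).character h := by
    intro i
    have h2 : Finset.univ.filter (fun x : G => x ∈ H) = insert (1:G) S := by
      ext x
      simp only [Finset.mem_filter, Finset.mem_univ, true_and, Finset.mem_insert, hS]
      constructor
      · intro hx
        by_cases hx1 : x = 1
        · exact Or.inl hx1
        · exact Or.inr ⟨hx, hx1⟩
      · rintro (rfl | ⟨hx, _⟩)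
        · exact H.one_mem
        · exact hx
    have h1notS : (1:G) ∉ S := by simp [hS]
    simp only [fourierSample]
    rw [← Finset.sum_subtype (Finset.univ.filter (fun x : G => x ∈ H))
        (fun x => by simp) (fun x => (V i).character x),
      ← Finset.sum_subtype ({1} : Finset G)
        (fun x => by simp [Subgroup.mem_bot]) (fun x => (V i).character x),
      h2, Finset.sum_insert h1notS, Finset.sum_singleton]
    ring
  have habs : ∀ i : ι, ‖fourierSample V H i - fourierSample V ⊥ i‖
      = (‖(V i).character 1‖ / Real.sqrt (Fintype.card G))
          * ‖(inner ℂ (w i) fvec : ℂ)‖ := by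
    intro i
    rw [hdiff i, hinner i, norm_mul, norm_div, Complex.norm_natCast,
      div_mul_div_comm, Real.mul_self_sqrt hnR.le]
    ring
  -- Bessel for the dimension vector
  set e1 : EuclideanSpace ℂ G :=
    WithLp.toLp 2 (fun g => if g = 1 then ((Real.sqrt (Fintype.card G) : ℝ) : ℂ) else 0 : G → ℂ) with he1
  have hinner1 : ∀ i : ι, ‖(inner ℂ (w i) e1 : ℂ)‖ = ‖(V i).character 1‖ := by
    intro i
    have h1 : (inner ℂ (w i) e1 : ℂ) = (starRingEnd ℂ) ((V i).character 1) := by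
      rw [PiLp.inner_apply, Finset.sum_eq_single 1]
      · simp only [hw, he1, if_pos rfl, RCLike.inner_apply]
        rw [map_div₀, Complex.conj_ofReal, if_pos trivial, mul_comm, div_mul_cancel₀ _ hcne]
      · intro b _ hb
        simp [he1, hb, RCLike.inner_apply]
      · simp
    rw [h1, RCLike.norm_conj]
  have hnorme1 : ‖e1‖ ^ 2 = ((Fintype.card G : ℕ) : ℝ) := by
    rw [EuclideanSpace.norm_eq, Real.sq_sqrt (by positivity)]
    rw [Finset.sum_eq_single 1]
    · have hx : e1 1 = ((Real.sqrt (Fintype.card G) : ℝ) : ℂ) := by simp [he1]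
      rw [hx, Complex.norm_real, Real.norm_of_nonneg (Real.sqrt_nonneg _),
        Real.sq_sqrt hnR.le]
    · intro b _ hb
      simp [he1, hb]
    · simp
  have hA : ∑ i : ι, (‖(V i).character 1‖ / Real.sqrt (Fintype.card G)) ^ 2
      ≤ 1 := by
    have h1 : ∀ i : ι, (‖(V i).character 1‖ / Real.sqrt (Fintype.card G)) ^ 2
        = ‖(inner ℂ (w i) e1 : ℂ)‖ ^ 2 / (Fintype.card G : ℝ) := by
      intro i
      rw [hinner1 i, div_pow, Real.sq_sqrt hnR.le]
    rw [Finset.sum_congr rfl fun i _ => h1 i, ← Finset.sum_div, div_le_one hnR]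
    calc ∑ i : ι, ‖(inner ℂ (w i) e1 : ℂ)‖ ^ 2 ≤ ‖e1‖ ^ 2 :=
          hworth.sum_inner_products_le (s := Finset.univ) e1
      _ = ((Fintype.card G : ℕ) : ℝ) := hnorme1
  have hnormf : ‖fvec‖ ^ 2
      = ∑ C ∈ Finset.univ.filter (fun C : ConjClasses G => C ≠ ConjClasses.mk 1),
          (Nat.card (C.carrier ∩ (H : Set G) : Set G) : ℝ) ^ 2 / (Nat.card C.carrier : ℝ) := by
    rw [EuclideanSpace.norm_eq, Real.sq_sqrt (by positivity)]
    rw [← sum_sq_ratio (G := G) H]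
    refine Finset.sum_congr rfl fun g _ => ?_
    rw [hfvec]
    simp only
    rw [norm_div, Complex.norm_natCast, Complex.norm_natCast, hS, hK]
  have hB : ∑ i : ι, ‖(inner ℂ (w i) fvec : ℂ)‖ ^ 2
      ≤ ∑ C ∈ Finset.univ.filter (fun C : ConjClasses G => C ≠ ConjClasses.mk 1),
          (Nat.card (C.carrier ∩ (H : Set G) : Set G) : ℝ) ^ 2 / (Nat.card C.carrier : ℝ) :=
    le_trans (hworth.sum_inner_products_le (s := Finset.univ) fvec) (le_of_eq hnormf)
  have hTnonneg : (0:ℝ) ≤ ∑ i : ι, ‖(inner ℂ (w i) fvec : ℂ)‖ ^ 2 := by positivity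
  simp only [tvDist]
  rw [Finset.sum_congr rfl fun i _ => habs i]
  have hcs := Real.sum_mul_le_sqrt_mul_sqrt Finset.univ
    (fun i => ‖(V i).character 1‖ / Real.sqrt (Fintype.card G))
    (fun i => ‖(inner ℂ (w i) fvec : ℂ)‖)
  have hfinal : (∑ i : ι, (‖(V i).character 1‖ / Real.sqrt (Fintype.card G))
        * ‖(inner ℂ (w i) fvec : ℂ)‖)
      ≤ Real.sqrt (∑ C ∈ Finset.univ.filter (fun C : ConjClasses G => C ≠ ConjClasses.mk 1),
          (Nat.card (C.carrier ∩ (H : Set G) : Set G) : ℝ) ^ 2 / (Nat.card C.carrier : ℝ)) := by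
    refine le_trans hcs ?_
    have h1 : Real.sqrt (∑ i : ι,
        (‖(V i).character 1‖ / Real.sqrt (Fintype.card G)) ^ 2) ≤ 1 :=
      Real.sqrt_le_one.mpr hA
    have h2 : Real.sqrt (∑ i : ι, ‖(inner ℂ (w i) fvec : ℂ)‖ ^ 2)
        ≤ Real.sqrt (∑ C ∈ Finset.univ.filter
            (fun C : ConjClasses G => C ≠ ConjClasses.mk 1),
          (Nat.card (C.carrier ∩ (H : Set G) : Set G) : ℝ) ^ 2 / (Nat.card C.carrier : ℝ)) :=
      Real.sqrt_le_sqrt hB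
    calc Real.sqrt _ * Real.sqrt _ ≤ 1 * Real.sqrt (∑ C ∈ Finset.univ.filter
            (fun C : ConjClasses G => C ≠ ConjClasses.mk 1),
          (Nat.card (C.carrier ∩ (H : Set G) : Set G) : ℝ) ^ 2 / (Nat.card C.carrier : ℝ)) :=
          mul_le_mul h1 h2 (Real.sqrt_nonneg _) zero_le_one
      _ = _ := one_mul _
  have hhalf : (0:ℝ) ≤ 1/2 := by norm_num
  exact mul_le_mul_of_nonneg_left hfinal hhalf

end
end

section
/- Let G be a finite group and H a subgroup of G. For each subgroup H, define the probability measure P_H on Irr(G) by P_H(ρ) = (d_ρ/|G|)·Σ_{h∈H} χ^ρ(h). Let C_1,…,C_k denote the non-identity conjugacy classes of G. Then ||P_H − P_{{e}}||_TV ≤ (1/2)·Σ_{i=1}^k |C_i ∩ H|·|C_i|^{−1/2}, where P_{{e}} is the measure corresponding to the trivial subgroup (i.e., the Plancherel measure ρ ↦ d_ρ²/|G|). -/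
open CategoryTheory
open scoped BigOperators Classical

noncomputable section

lemma char_conj_inv {G : Type} [Group G] [Fintype G] (W : FDRep ℂ G) (g : G) :
    (starRingEnd ℂ) (W.character g) = W.character g⁻¹ := by
  classical
  set n := Module.finrank ℂ W with hn
  let b : Module.Basis (Fin n) ℂ W := Module.finBasis ℂ W
  letI c : InnerProductSpace.Core ℂ W :=
  { inner := fun u v => ∑ x : G, ∑ j, (starRingEnd ℂ) (b.repr (W.ρ x u) j) * b.repr (W.ρ x v) j
    conj_inner_symm := fun u v => by
      simp only [map_sum, map_mul, Complex.conj_conj]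
      exact Finset.sum_congr rfl fun x _ => Finset.sum_congr rfl fun j _ => mul_comm _ _
    re_inner_nonneg := fun u => by
      have hsq : ∀ x : G, (∑ j, (starRingEnd ℂ) (b.repr (W.ρ x u) j) * b.repr (W.ρ x u) j).re
          = ∑ j, ‖b.repr (W.ρ x u) j‖ ^ 2 := fun x => by
        simp [Complex.re_sum, Complex.conj_mul', ← Complex.ofReal_pow]
      show (0:ℝ) ≤ (∑ x : G, ∑ j, (starRingEnd ℂ) (b.repr (W.ρ x u) j) * b.repr (W.ρ x u) j).re
      rw [Complex.re_sum, Finset.sum_congr rfl fun x _ => hsq x]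
      exact Finset.sum_nonneg fun x _ => Finset.sum_nonneg fun j _ => sq_nonneg _
    add_left := fun u v w => by
      simp only [map_add, add_mul, Finset.sum_add_distrib, Finsupp.add_apply]
    smul_left := fun u v r => by
      simp only [map_smul, Finsupp.smul_apply, smul_eq_mul, map_mul, Finset.mul_sum, mul_assoc]
    definite := fun u hu => by
      have hre : ∑ x : G, ∑ j, ‖b.repr (W.ρ x u) j‖ ^ 2 = 0 := by
        have := congrArg Complex.re hu
        simpa [Complex.re_sum, Complex.conj_mul', ← Complex.ofReal_pow, Complex.ofReal_re]
          using this
      have h1 : ∑ j, ‖b.repr (W.ρ 1 u) j‖ ^ 2 = 0 :=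
        (Finset.sum_eq_zero_iff_of_nonneg (fun x _ =>
          Finset.sum_nonneg fun j _ => sq_nonneg _)).1 hre 1 (Finset.mem_univ _)
      have h2 : ∀ j, b.repr (W.ρ 1 u) j = 0 := fun j => by
        have := (Finset.sum_eq_zero_iff_of_nonneg (fun j _ => sq_nonneg
          (‖b.repr (W.ρ 1 u) j‖))).1 h1 j (Finset.mem_univ _)
        simpa using pow_eq_zero_iff (n := 2) (by norm_num) |>.1 this
      have h3 : W.ρ 1 u = 0 := by
        have : b.repr (W.ρ 1 u) = 0 := Finsupp.ext h2
        exact (LinearEquiv.map_eq_zero_iff b.repr).1 this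
      simpa using h3 }
  letI : NormedAddCommGroup W := c.toNormedAddCommGroup
  letI : InnerProductSpace ℂ W := InnerProductSpace.ofCore c.toCore
  have hinv : ∀ (h : G) (u v : W), (inner ℂ (W.ρ h u) (W.ρ h v) : ℂ) = inner ℂ u v := by
    intro h u v
    show ∑ x : G, ∑ j, (starRingEnd ℂ) (b.repr (W.ρ x (W.ρ h u)) j) * b.repr (W.ρ x (W.ρ h v)) j
      = ∑ x : G, ∑ j, (starRingEnd ℂ) (b.repr (W.ρ x u) j) * b.repr (W.ρ x v) j
    rw [← Equiv.sum_comp (Equiv.mulRight h) (fun x => ∑ j,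
      (starRingEnd ℂ) (b.repr (W.ρ x u) j) * b.repr (W.ρ x v) j)]
    refine Finset.sum_congr rfl fun x _ => ?_
    have hx : ∀ w : W, W.ρ (x * h) w = W.ρ x (W.ρ h w) := fun w => by
      rw [map_mul]; rfl
    simp [Equiv.mulRight, Equiv.coe_fn_mk, mul_comm, hx]
  have hcancel : ∀ (a : G) (v : W), W.ρ a⁻¹ (W.ρ a v) = v := fun a v => by
    have : (W.ρ a⁻¹ * W.ρ a) v = (1 : W →ₗ[ℂ] W) v := by
      rw [← map_mul]; simp
    simpa using this
  let ob := stdOrthonormalBasis ℂ W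
  have tr : ∀ (f : W →ₗ[ℂ] W), LinearMap.trace ℂ W f
      = ∑ i, (inner ℂ (ob i) (f (ob i)) : ℂ) := by
    intro f
    rw [LinearMap.trace_eq_matrix_trace ℂ ob.toBasis f, Matrix.trace]
    refine Finset.sum_congr rfl fun i _ => ?_
    rw [Matrix.diag_apply, LinearMap.toMatrix_apply, OrthonormalBasis.coe_toBasis,
      ← ob.repr_apply_apply, ← OrthonormalBasis.coe_toBasis_repr_apply]
  show (starRingEnd ℂ) (LinearMap.trace ℂ W (W.ρ g)) = LinearMap.trace ℂ W (W.ρ g⁻¹)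
  rw [tr, tr, map_sum]
  refine Finset.sum_congr rfl fun i _ => ?_
  rw [inner_conj_symm, ← hinv g⁻¹, hcancel]


lemma bessel_char {G : Type} [Group G] [Fintype G] {ι : Type} [Fintype ι]
    (V : ι → FDRep ℂ G) (hirr : ∀ i, Simple (V i))
    (hdistinct : ∀ i j : ι, Nonempty (V i ≅ V j) → i = j) (g : G) :
    ∑ i : ι, ‖(V i).character g‖ ^ 2 ≤
      (Fintype.card G : ℝ) / (Nat.card (ConjClasses.mk g).carrier : ℝ) := by
  classical
  have hN : 0 < (Fintype.card G : ℝ) := by exact_mod_cast Fintype.card_pos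
  have hNne : ((Fintype.card G : ℕ) : ℂ) ≠ 0 := Nat.cast_ne_zero.2 Fintype.card_ne_zero
  letI : Invertible ((Fintype.card G : ℕ) : ℂ) := invertibleOfNonzero hNne
  set s : ℝ := Real.sqrt (Fintype.card G) with hs
  have hs0 : 0 < s := Real.sqrt_pos.2 hN
  have hss : (s : ℂ) * (s : ℂ) = ((Fintype.card G : ℕ) : ℂ) := by
    rw [← Complex.ofReal_mul, Real.mul_self_sqrt hN.le]
    norm_cast
  let e : ι → EuclideanSpace ℂ G := fun i => WithLp.toLp 2 (fun a => (V i).character a / (s : ℂ))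
  have hip : ∀ (y z : EuclideanSpace ℂ G),
      (inner ℂ y z : ℂ) = ∑ a : G, (starRingEnd ℂ) (y a) * z a := by
    intro y z
    simp [PiLp.inner_apply, RCLike.inner_apply]
    exact Finset.sum_congr rfl fun _ _ => mul_comm _ _
  have hconj : ∀ (i : ι) (a : G),
      (starRingEnd ℂ) (e i a) = (V i).character a⁻¹ / (s : ℂ) := by
    intro i a
    simp only [e, map_div₀, char_conj_inv, Complex.conj_ofReal]
  have horth : Orthonormal ℂ e := by
    rw [orthonormal_iff_ite]
    intro i j
    haveI := hirr i; haveI := hirr j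
    letI : Fintype G := ‹Fintype G›
    letI : Invertible ((Nat.card G : ℕ) : ℂ) := invertibleOfNonzero (by rw [Nat.card_eq_fintype_card]; exact hNne)
    have key : ((Fintype.card G : ℕ) : ℂ)⁻¹ * ∑ a : G, (V i).character a * (V j).character a⁻¹
        = if Nonempty (V i ≅ V j) then 1 else 0 := by
      have h := FDRep.char_orthonormal (k := ℂ) (G := G) (V i) (V j)
      rw [Nat.card_eq_fintype_card] at h
      exact h
    have heq : (inner ℂ (e i) (e j) : ℂ) =
        ((Fintype.card G : ℕ) : ℂ)⁻¹ * ∑ a : G, (V i).character a * (V j).character a⁻¹ := by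
      rw [hip, Finset.mul_sum,
        ← Equiv.sum_comp (Equiv.inv G) (fun a => ((Fintype.card G : ℕ) : ℂ)⁻¹ *
          ((V i).character a * (V j).character a⁻¹))]
      refine Finset.sum_congr rfl fun a _ => ?_
      simp only [Equiv.inv_apply, inv_inv, hconj]
      show (V i).character a⁻¹ / (s:ℂ) * ((V j).character a / (s:ℂ)) = _
      rw [div_mul_div_comm, hss, div_eq_mul_inv, mul_comm]
    rw [heq, key]
    by_cases h : i = j
    · subst h; rw [if_pos ⟨Iso.refl _⟩, if_pos rfl]
    · rw [if_neg (fun hne => h (hdistinct _ _ hne)), if_neg h]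
  set C : Finset G := Finset.univ.filter (fun a => ConjClasses.mk a = ConjClasses.mk g)
    with hCdef
  have hgC : g ∈ C := by simp [hCdef]
  have hCpos : 0 < (C.card : ℝ) := by
    exact_mod_cast Finset.card_pos.2 ⟨g, hgC⟩
  let x : EuclideanSpace ℂ G := WithLp.toLp 2 (fun a => if ConjClasses.mk a = ConjClasses.mk g then (1 : ℂ) else 0)
  have hchar : ∀ a ∈ C, ∀ i, (V i).character a = (V i).character g := by
    intro a ha i
    have hmk : ConjClasses.mk a = ConjClasses.mk g := by simpa [hCdef] using ha
    obtain ⟨c, hc⟩ := isConj_iff.1 (ConjClasses.mk_eq_mk_iff_isConj.1 hmk)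
    rw [← hc, FDRep.char_conj]
  have hxi : ∀ i, (inner ℂ (e i) x : ℂ) =
      (C.card : ℂ) * (starRingEnd ℂ) ((V i).character g) / (s : ℂ) := by
    intro i
    rw [hip]
    rw [← Finset.sum_filter_add_sum_filter_not Finset.univ
      (fun a => ConjClasses.mk a = ConjClasses.mk g)]
    have h2 : ∀ a ∈ Finset.univ.filter
        (fun a => ¬ ConjClasses.mk a = ConjClasses.mk g),
        (starRingEnd ℂ) (e i a) * x a = 0 := by
      intro a ha
      have : ¬ ConjClasses.mk a = ConjClasses.mk g := by simpa using ha
      simp [x, this]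
    rw [Finset.sum_eq_zero h2, add_zero]
    have h1 : ∀ a ∈ C, (starRingEnd ℂ) (e i a) * x a
        = (starRingEnd ℂ) ((V i).character g) / (s : ℂ) := by
      intro a ha
      have hmk : ConjClasses.mk a = ConjClasses.mk g := by simpa [hCdef] using ha
      have : (starRingEnd ℂ) (e i a) = (starRingEnd ℂ) ((V i).character g) / (s : ℂ) := by
        show (starRingEnd ℂ) ((V i).character a / (s:ℂ)) = _
        rw [hchar a ha i, map_div₀, Complex.conj_ofReal]
      rw [this]
      simp [x, hmk]
    rw [← hCdef, Finset.sum_congr rfl h1, Finset.sum_const, nsmul_eq_mul, mul_div_assoc]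
  have hBessel := horth.sum_inner_products_le (s := Finset.univ) x
  have hnx : ‖x‖ ^ 2 = (C.card : ℝ) := by
    rw [EuclideanSpace.norm_eq, Real.sq_sqrt (Finset.sum_nonneg fun a _ => sq_nonneg _)]
    rw [Finset.sum_congr rfl (fun a _ => show ‖x a‖^2 =
      (if ConjClasses.mk a = ConjClasses.mk g then (1:ℝ) else 0) by
        by_cases h : ConjClasses.mk a = ConjClasses.mk g <;> simp [x, h])]
    rw [Finset.sum_boole]
  have hterm : ∀ i : ι, ‖(inner ℂ (e i) x : ℂ)‖^2
      = (C.card:ℝ)^2 * ‖(V i).character g‖^2 / (Fintype.card G : ℝ) := by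
    intro i
    rw [hxi i, norm_div, norm_mul, Complex.norm_natCast, Complex.norm_conj,
      Complex.norm_real, Real.norm_eq_abs, abs_of_pos hs0, div_pow, mul_pow, hs, Real.sq_sqrt hN.le]
  have hsum' : ((C.card:ℝ)^2 / (Fintype.card G:ℝ)) *
      (∑ i : ι, ‖(V i).character g‖^2) ≤ (C.card:ℝ) := by
    rw [Finset.mul_sum]
    calc ∑ i : ι, (C.card:ℝ)^2 / (Fintype.card G:ℝ) * ‖(V i).character g‖^2
        = ∑ i : ι, ‖(inner ℂ (e i) x : ℂ)‖^2 :=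
          Finset.sum_congr rfl fun i _ => by rw [hterm i]; ring
      _ ≤ ‖x‖^2 := hBessel
      _ = (C.card:ℝ) := hnx
  have hcard : ((Nat.card (ConjClasses.mk g).carrier : ℕ) : ℝ) = (C.card : ℝ) := by
    have h1 : (ConjClasses.mk g).carrier = {a : G | ConjClasses.mk a = ConjClasses.mk g} :=
      Set.ext fun a => ConjClasses.mem_carrier_iff_mk_eq
    rw [h1, Nat.card_eq_fintype_card]
    norm_cast
    rw [Fintype.card_subtype]
    rfl
  rw [hcard]
  set T := ∑ i : ι, ‖(V i).character g‖^2 with hT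
  have hTnn : 0 ≤ T := Finset.sum_nonneg fun i _ => sq_nonneg _
  have hTc : T * (C.card:ℝ) ≤ (Fintype.card G:ℝ) := by
    have h3 : ((C.card:ℝ)^2 / (Fintype.card G:ℝ)) * T * (Fintype.card G:ℝ)
        ≤ (C.card:ℝ) * (Fintype.card G:ℝ) := mul_le_mul_of_nonneg_right hsum' hN.le
    have h4 : ((C.card:ℝ)^2 / (Fintype.card G:ℝ)) * T * (Fintype.card G:ℝ)
        = (C.card:ℝ) * (T * (C.card:ℝ)) := by
      field_simp
    rw [h4] at h3
    exact le_of_mul_le_mul_left h3 hCpos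
  exact (le_div_iff₀ hCpos).2 hTc



lemma class_one_card {G : Type} [Group G] [Fintype G] :
    Nat.card (ConjClasses.mk (1 : G)).carrier = 1 := by
  have h1 : (ConjClasses.mk (1:G)).carrier = {(1:G)} := by
    ext a
    rw [ConjClasses.mem_carrier_iff_mk_eq, Set.mem_singleton_iff,
      ConjClasses.mk_eq_mk_iff_isConj, isConj_one_left]
  rw [h1, Nat.card_unique]

lemma card_carrier_pos {G : Type} [Group G] [Fintype G] (g : G) :
    0 < Nat.card (ConjClasses.mk g).carrier := by
  haveI : Nonempty ((ConjClasses.mk g).carrier) :=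
    ⟨⟨g, ConjClasses.mem_carrier_iff_mk_eq.2 rfl⟩⟩
  exact Nat.card_pos

lemma sum_dim_mul_abs_char_le {G : Type} [Group G] [Fintype G] {ι : Type} [Fintype ι]
    (V : ι → FDRep ℂ G) (hirr : ∀ i, Simple (V i))
    (hdistinct : ∀ i j : ι, Nonempty (V i ≅ V j) → i = j) (h : G) :
    ∑ i : ι, ‖(V i).character 1‖ * ‖(V i).character h‖
      ≤ (Fintype.card G : ℝ) / Real.sqrt (Nat.card (ConjClasses.mk h).carrier) := by
  have hN : (0:ℝ) < (Fintype.card G : ℝ) := by exact_mod_cast Fintype.card_pos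
  have hc : (0:ℝ) < (Nat.card (ConjClasses.mk h).carrier : ℝ) := by
    exact_mod_cast card_carrier_pos h
  have hCS := Finset.sum_mul_sq_le_sq_mul_sq Finset.univ
    (fun i => ‖(V i).character 1‖) (fun i => ‖(V i).character h‖)
  have h1 : ∑ i : ι, ‖(V i).character 1‖ ^ 2 ≤ (Fintype.card G : ℝ) := by
    have := bessel_char V hirr hdistinct 1
    rwa [class_one_card, Nat.cast_one, div_one] at this
  have h2 := bessel_char V hirr hdistinct h
  have hA : (0:ℝ) ≤ ∑ i : ι, ‖(V i).character 1‖ * ‖(V i).character h‖ :=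
    Finset.sum_nonneg fun i _ => mul_nonneg (norm_nonneg _) (norm_nonneg _)
  have hsq : (∑ i : ι, ‖(V i).character 1‖ * ‖(V i).character h‖) ^ 2
      ≤ (Fintype.card G : ℝ)^2 / (Nat.card (ConjClasses.mk h).carrier : ℝ) := by
    calc (∑ i : ι, ‖(V i).character 1‖ * ‖(V i).character h‖) ^ 2
        ≤ (∑ i : ι, ‖(V i).character 1‖ ^ 2) *
          (∑ i : ι, ‖(V i).character h‖ ^ 2) := hCS
      _ ≤ (Fintype.card G : ℝ) *
          ((Fintype.card G : ℝ) / (Nat.card (ConjClasses.mk h).carrier : ℝ)) := by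
          refine mul_le_mul h1 h2 (Finset.sum_nonneg fun i _ => sq_nonneg _) hN.le
      _ = (Fintype.card G : ℝ)^2 / (Nat.card (ConjClasses.mk h).carrier : ℝ) := by ring
  have := (Real.le_sqrt hA (by positivity)).2 hsq
  calc ∑ i : ι, ‖(V i).character 1‖ * ‖(V i).character h‖
      ≤ Real.sqrt ((Fintype.card G : ℝ)^2 / (Nat.card (ConjClasses.mk h).carrier : ℝ)) := this
    _ = (Fintype.card G : ℝ) / Real.sqrt (Nat.card (ConjClasses.mk h).carrier : ℝ) := by
        rw [Real.sqrt_div (sq_nonneg _), Real.sqrt_sq hN.le]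


/-- Proposition (Kempe–Shalev): with `P_H(ρ) = (d_ρ/|G|) Σ_(h∈H) χ^ρ(h)` and
`C_1, …, C_k` the non-identity conjugacy classes of `G`,
`‖P_H − P_(e)‖_TV ≤ (1/2) Σ_i |C_i ∩ H| |C_i|^(−1/2)`,
where `P_(e)` is the measure for the trivial subgroup (the Plancherel measure). -/
theorem fourier_sample_tv_le {G : Type} [Group G] [Fintype G]
    [Fintype (ConjClasses G)] [DecidableEq (ConjClasses G)]
    {ι : Type} [Fintype ι] [DecidableEq ι]
    (V : ι → FDRep ℂ G)
    (hirr : ∀ i, CategoryTheory.Simple (V i))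
    (hdistinct : ∀ i j : ι, Nonempty (V i ≅ V j) → i = j)
    (hcomplete : ∀ W : FDRep ℂ G, CategoryTheory.Simple W → ∃ i, Nonempty (W ≅ V i))
    (H : Subgroup G) :
    tvDist (fourierSample V H) (fourierSample V ⊥) ≤
      (1 / 2) * ∑ C ∈ Finset.univ.filter
          (fun C : ConjClasses G => C ≠ ConjClasses.mk 1),
        (Nat.card (C.carrier ∩ (H : Set G) : Set G) : ℝ) /
          Real.sqrt (Nat.card C.carrier) := by
  classical
  have hN : (0:ℝ) < (Fintype.card G : ℝ) := by exact_mod_cast Fintype.card_pos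
  set E : Finset H := Finset.univ.erase 1 with hE
  -- pointwise difference
  have hdiff : ∀ ρ : ι, fourierSample V H ρ - fourierSample V ⊥ ρ
      = (V ρ).character 1 / (Fintype.card G : ℂ) * ∑ h ∈ E, (V ρ).character (h : G) := by
    intro ρ
    have hbot : ∑ h : (⊥ : Subgroup G), (V ρ).character (h : G) = (V ρ).character 1 := by
      rw [Finset.sum_eq_single (1 : (⊥ : Subgroup G))
        (fun b _ hb => (hb (Subtype.ext (Subgroup.mem_bot.1 b.2))).elim)
        (fun hh => (hh (Finset.mem_univ _)).elim)]
      simp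
    have hH : ∑ h : H, (V ρ).character (h : G)
        = (V ρ).character 1 + ∑ h ∈ E, (V ρ).character (h : G) := by
      rw [hE, ← Finset.add_sum_erase Finset.univ _ (Finset.mem_univ (1 : H))]
      simp
    have hbot' : fourierSample V ⊥ ρ
        = (V ρ).character 1 / (Fintype.card G : ℂ) * (V ρ).character 1 := by
      simp only [fourierSample]
      congr 1
      convert hbot using 2
      congr!
    rw [hbot']
    simp only [fourierSample, hH]
    ring
  -- step 1 : bound the sum of abs by sum over nonidentity elements of H
  have hstep1 : ∑ ρ : ι, ‖fourierSample V H ρ - fourierSample V ⊥ ρ‖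
      ≤ ∑ h ∈ E, 1 / Real.sqrt (Nat.card (ConjClasses.mk (h : G)).carrier) := by
    calc ∑ ρ : ι, ‖fourierSample V H ρ - fourierSample V ⊥ ρ‖
        ≤ ∑ ρ : ι, ∑ h ∈ E, ‖(V ρ).character 1‖
            * ‖(V ρ).character (h : G)‖ / (Fintype.card G : ℝ) := by
          refine Finset.sum_le_sum fun ρ _ => ?_
          rw [hdiff ρ, norm_mul, norm_div, Complex.norm_natCast]
          calc ‖(V ρ).character 1‖ / (Fintype.card G : ℝ)
                * ‖∑ h ∈ E, (V ρ).character (h : G)‖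
              ≤ ‖(V ρ).character 1‖ / (Fintype.card G : ℝ)
                * ∑ h ∈ E, ‖(V ρ).character (h : G)‖ := by
                refine mul_le_mul_of_nonneg_left (norm_sum_le _ _) (by positivity)
            _ = ∑ h ∈ E, ‖(V ρ).character 1‖
                * ‖(V ρ).character (h : G)‖ / (Fintype.card G : ℝ) := by
                rw [Finset.mul_sum]
                exact Finset.sum_congr rfl fun h _ => by ring
      _ = ∑ h ∈ E, (∑ ρ : ι, ‖(V ρ).character 1‖
            * ‖(V ρ).character (h : G)‖) / (Fintype.card G : ℝ) := by
          rw [Finset.sum_comm]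
          exact Finset.sum_congr rfl fun h _ => (Finset.sum_div _ _ _).symm
      _ ≤ ∑ h ∈ E, ((Fintype.card G : ℝ)
            / Real.sqrt (Nat.card (ConjClasses.mk (h : G)).carrier)) / (Fintype.card G : ℝ) := by
          refine Finset.sum_le_sum fun h _ => ?_
          gcongr
          exact sum_dim_mul_abs_char_le V hirr hdistinct (h : G)
      _ = ∑ h ∈ E, 1 / Real.sqrt (Nat.card (ConjClasses.mk (h : G)).carrier) := by
          refine Finset.sum_congr rfl fun h _ => ?_
          rw [div_right_comm, div_self hN.ne']
  -- step 2 : transfer to a sum over G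
  set S : Finset G := Finset.univ.filter (fun g => g ∈ H ∧ g ≠ 1) with hS
  have hES : ∑ h ∈ E, 1 / Real.sqrt (Nat.card (ConjClasses.mk (h : G)).carrier)
      = ∑ g ∈ S, 1 / Real.sqrt (Nat.card (ConjClasses.mk g).carrier) := by
    refine Finset.sum_bij (fun (h : H) _ => (h : G)) ?_ ?_ ?_ ?_
    · intro a ha
      refine Finset.mem_filter.2 ⟨Finset.mem_univ _, a.2, ?_⟩
      intro h1
      exact (Finset.mem_erase.1 ha).1 (Subtype.ext h1)
    · intro a _ b _ hab
      exact Subtype.ext hab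
    · intro g hg
      obtain ⟨-, hgH, hg1⟩ := Finset.mem_filter.1 hg
      refine ⟨⟨g, hgH⟩, Finset.mem_erase.2 ⟨?_, Finset.mem_univ _⟩, rfl⟩
      exact fun h1 => hg1 (congrArg Subtype.val h1)
    · intro a _; rfl
  -- step 3 : regroup over conjugacy classes
  have hfib : ∑ g ∈ S, 1 / Real.sqrt (Nat.card (ConjClasses.mk g).carrier)
      = ∑ t : ConjClasses G, ((S.filter (fun g => ConjClasses.mk g = t)).card : ℝ)
          * (1 / Real.sqrt (Nat.card t.carrier)) := by
    rw [← Finset.sum_fiberwise S (fun g => ConjClasses.mk g)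
      (fun g => 1 / Real.sqrt (Nat.card (ConjClasses.mk g).carrier))]
    refine Finset.sum_congr rfl fun t _ => ?_
    rw [Finset.sum_congr rfl (fun g hg => by
      rw [(Finset.mem_filter.1 hg).2])]
    rw [Finset.sum_const, nsmul_eq_mul]
  have hrestrict : ∑ t : ConjClasses G, ((S.filter (fun g => ConjClasses.mk g = t)).card : ℝ)
          * (1 / Real.sqrt (Nat.card t.carrier))
      = ∑ t ∈ Finset.univ.filter (fun C : ConjClasses G => C ≠ ConjClasses.mk 1),
          ((S.filter (fun g => ConjClasses.mk g = t)).card : ℝ)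
          * (1 / Real.sqrt (Nat.card t.carrier)) := by
    symm
    refine Finset.sum_subset (Finset.filter_subset _ _) ?_
    intro t _ ht
    have ht1 : t = ConjClasses.mk 1 := by
      by_contra h1
      exact ht (Finset.mem_filter.2 ⟨Finset.mem_univ _, h1⟩)
    have : S.filter (fun g => ConjClasses.mk g = t) = ∅ := by
      refine Finset.filter_eq_empty_iff.2 fun {g} hg => ?_
      obtain ⟨-, -, hg1⟩ := Finset.mem_filter.1 hg
      rw [ht1]
      intro hmk
      exact hg1 ((isConj_one_left).1 (ConjClasses.mk_eq_mk_iff_isConj.1 hmk))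
    rw [this]
    simp
  have hcardfib : ∀ t : ConjClasses G, t ≠ ConjClasses.mk 1 →
      ((S.filter (fun g => ConjClasses.mk g = t)).card : ℝ)
      = (Nat.card (t.carrier ∩ (H : Set G) : Set G) : ℝ) := by
    intro t ht
    have hset : S.filter (fun g => ConjClasses.mk g = t)
        = Finset.univ.filter (fun g => g ∈ t.carrier ∩ (H : Set G)) := by
      ext g
      simp only [hS, Finset.mem_filter, Finset.mem_univ, true_and, Set.mem_inter_iff,
        SetLike.mem_coe, ConjClasses.mem_carrier_iff_mk_eq]
      constructor
      · rintro ⟨⟨hgH, -⟩, hmk⟩; exact ⟨hmk, hgH⟩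
      · rintro ⟨hmk, hgH⟩
        exact ⟨⟨hgH, fun h1 => ht (by rw [← hmk, h1])⟩, hmk⟩
    have hnat : Nat.card (t.carrier ∩ (H : Set G) : Set G)
        = (Finset.univ.filter (fun g => g ∈ t.carrier ∩ (H : Set G))).card := by
      rw [Nat.card_eq_card_toFinset]
      congr 1
      ext g
      simp [Set.mem_toFinset]
    rw [hset, hnat]
  -- put everything together
  rw [tvDist]
  refine mul_le_mul_of_nonneg_left ?_ (by norm_num)
  calc ∑ x : ι, ‖fourierSample V H x - fourierSample V ⊥ x‖
      ≤ ∑ h ∈ E, 1 / Real.sqrt (Nat.card (ConjClasses.mk (h : G)).carrier) := hstep1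
    _ = ∑ t ∈ Finset.univ.filter (fun C : ConjClasses G => C ≠ ConjClasses.mk 1),
          ((S.filter (fun g => ConjClasses.mk g = t)).card : ℝ)
          * (1 / Real.sqrt (Nat.card t.carrier)) := by rw [hES, hfib, hrestrict]
    _ = ∑ t ∈ Finset.univ.filter (fun C : ConjClasses G => C ≠ ConjClasses.mk 1),
          (Nat.card (t.carrier ∩ (H : Set G) : Set G) : ℝ) / Real.sqrt (Nat.card t.carrier) := by
        refine Finset.sum_congr rfl fun t ht => ?_
        rw [hcardfib t (Finset.mem_filter.1 ht).2]
        ring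


end
end
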